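/- Let m be a positive integer, τ > 0, d a positive integer, and let v_1, …, v_m be vectors in ℝ^d with M := max_{1≤i≤m} ‖v_i‖. Then for all reals 0 ≤ t' ≤ t'', the averaged and switched integrals differ by at most a quantity proportional to τ: ‖∫_{t'}^{t''} ( (1/m) ∑_{i=1}^m v_i − v_{σ(s,τ)} ) ds‖ ≤ 4 m τ M. Consequently, for every compact interval I ⊂ [0, ∞), the quantity ∫_0^t ( (1/m) ∑_{i=1}^m v_i − v_{σ(s,τ)} ) ds converges to 0 as τ ↓ 0, uniformly in t ∈ I. -/

import Mathlib

open scoped BigOperators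
open Filter

/-- The round-robin switching scheme with `m` channels and switching time `τ`:
`σ(t,τ) := 1 + ⌊(t − mτ⌊t/(mτ)⌋)/τ⌋`. -/
noncomputable def roundRobin (m : ℕ) (τ t : ℝ) : ℤ :=
  1 + ⌊(t - (m : ℝ) * τ * (⌊t / ((m : ℝ) * τ)⌋ : ℤ)) / τ⌋

section aux
variable {d : ℕ} (m : ℕ) (τ : ℝ)

lemma rr_measurable (v : ℕ → EuclideanSpace ℝ (Fin d)) :
    Measurable (fun s : ℝ => v (roundRobin m τ s).toNat) := by
  have hg : Measurable fun t : ℝ => (t - (m:ℝ)*τ*(⌊t/((m:ℝ)*τ)⌋:ℤ))/τ :=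
    ((measurable_id.sub (measurable_const.mul
      ((measurable_of_countable _).comp (measurable_id.div_const _).floor))).div_const _)
  exact (measurable_of_countable (fun z : ℤ => v (1 + z).toNat)).comp hg.floor

lemma rr_mem (hm : 0 < m) (hτ : 0 < τ) (s : ℝ) :
    1 ≤ roundRobin m τ s ∧ roundRobin m τ s ≤ m := by
  have hm' : (0:ℝ) < m := by exact_mod_cast hm
  have hT : (0:ℝ) < (m:ℝ) * τ := by positivity
  have key : (s - (m:ℝ)*τ*(⌊s/((m:ℝ)*τ)⌋:ℤ))/τ = (m:ℝ) * Int.fract (s/((m:ℝ)*τ)) := by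
    rw [Int.fract]
    field_simp
  have h0 : (0:ℝ) ≤ (m:ℝ) * Int.fract (s/((m:ℝ)*τ)) := by
    have := Int.fract_nonneg (s/((m:ℝ)*τ)); positivity
  have h1 : (m:ℝ) * Int.fract (s/((m:ℝ)*τ)) < m := by
    have := Int.fract_lt_one (s/((m:ℝ)*τ)); nlinarith
  unfold roundRobin
  rw [key]
  constructor
  · have := Int.floor_nonneg.mpr h0; omega
  · have := Int.floor_lt.mpr h1; omega

lemma rr_periodic : Function.Periodic (roundRobin m τ) ((m:ℝ)*τ) := by
  intro s
  rcases eq_or_ne ((m:ℝ)*τ) 0 with h | h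
  · simp [h]
  unfold roundRobin
  have h1 : (s + (m:ℝ)*τ)/((m:ℝ)*τ) = s/((m:ℝ)*τ) + 1 := by rw [add_div, div_self h]
  have h2 : ⌊(s + (m:ℝ)*τ)/((m:ℝ)*τ)⌋ = ⌊s/((m:ℝ)*τ)⌋ + 1 := by
    rw [h1, Int.floor_add_one]
  rw [h2]
  congr 2
  push_cast
  ring

lemma rr_value (hm : 0 < m) (hτ : 0 < τ) (i : ℕ) (hi : i < m) (s : ℝ)
    (hs1 : (i:ℝ)*τ ≤ s) (hs2 : s < ((i:ℝ)+1)*τ) :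
    roundRobin m τ s = (i:ℤ) + 1 := by
  have hm' : (0:ℝ) < m := by exact_mod_cast hm
  have hT : (0:ℝ) < (m:ℝ) * τ := by positivity
  have h0 : (0:ℝ) ≤ s := le_trans (by positivity) hs1
  have him : ((i:ℝ)+1) ≤ m := by exact_mod_cast hi
  have hlt : s < (m:ℝ)*τ := lt_of_lt_of_le hs2 (by nlinarith)
  have hfl : ⌊s/((m:ℝ)*τ)⌋ = 0 := by
    rw [Int.floor_eq_zero_iff]
    constructor
    · positivity
    · rw [div_lt_one hT]; exact hlt
  unfold roundRobin
  rw [hfl]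
  have : ⌊(s - (m:ℝ)*τ*((0:ℤ):ℝ))/τ⌋ = (i:ℤ) := by
    rw [Int.floor_eq_iff]
    constructor
    · push_cast
      rw [le_div_iff₀ hτ]
      simpa [mul_comm] using hs1
    · push_cast
      rw [div_lt_iff₀ hτ]
      simpa [mul_comm] using hs2
  rw [this]
  ring

lemma rr_integrable (v : ℕ → EuclideanSpace ℝ (Fin d)) (hm : 0 < m) (hτ : 0 < τ)
    (a b : ℝ) :
    IntervalIntegrable (fun s => v (roundRobin m τ s).toNat) MeasureTheory.volume a b := by
  set M : ℝ := (Finset.Icc 1 m).sup' (Finset.nonempty_Icc.mpr hm) fun i => ‖v i‖ with hMdef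
  rw [intervalIntegrable_iff]
  apply MeasureTheory.Integrable.mono'
    ((MeasureTheory.integrableOn_const_iff (C := M)).mpr (Or.inr measure_Ioc_lt_top))
    ((rr_measurable m τ v).aestronglyMeasurable.restrict)
  filter_upwards with s
  have hmem := rr_mem m τ hm hτ s
  have : (roundRobin m τ s).toNat ∈ Finset.Icc 1 m := by
    simp only [Finset.mem_Icc]
    omega
  exact Finset.le_sup' (fun i => ‖v i‖) this

lemma rr_integral_period (v : ℕ → EuclideanSpace ℝ (Fin d)) (hm : 0 < m) (hτ : 0 < τ) :
    ∫ s in (0:ℝ)..((m:ℝ)*τ), v (roundRobin m τ s).toNat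
      = τ • ∑ i ∈ Finset.Icc 1 m, v i := by
  have key : ∀ i < m, ∫ s in ((i:ℝ)*τ)..(((i:ℝ)+1)*τ), v (roundRobin m τ s).toNat
      = τ • v (i+1) := by
    intro i hi
    have hle : (i:ℝ)*τ ≤ ((i:ℝ)+1)*τ := by nlinarith
    have hne : ∀ᵐ x : ℝ, x ≠ ((i:ℝ)+1)*τ := by
      rw [MeasureTheory.ae_iff]
      simpa using MeasureTheory.measure_singleton (((i:ℝ)+1)*τ)
    rw [intervalIntegral.integral_congr_ae (g := fun _ => v (i+1)) ?_]
    · rw [intervalIntegral.integral_const]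
      congr 1
      ring
    · filter_upwards [hne] with x hx hmem
      rw [Set.uIoc_of_le hle, Set.mem_Ioc] at hmem
      have : roundRobin m τ x = (i:ℤ) + 1 :=
        rr_value m τ hm hτ i hi x (le_of_lt hmem.1) (lt_of_le_of_ne hmem.2 hx)
      rw [this]
      norm_num
  have hsum := intervalIntegral.sum_integral_adjacent_intervals
    (a := fun k : ℕ => (k:ℝ)*τ) (n := m) (μ := MeasureTheory.volume)
    (f := fun s => v (roundRobin m τ s).toNat) ?_
  · have h0 : ((0:ℕ):ℝ)*τ = 0 := by norm_num
    have hm' : ((m:ℕ):ℝ)*τ = (m:ℝ)*τ := by norm_num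
    rw [h0, hm'] at hsum
    rw [← hsum]
    rw [Finset.smul_sum, ← Finset.Ico_add_one_right_eq_Icc, Finset.sum_Ico_eq_sum_range]
    simp only [Nat.add_sub_cancel]
    apply Finset.sum_congr rfl
    intro i hi
    rw [Finset.mem_range] at hi
    have h1 : ((i+1:ℕ):ℝ)*τ = ((i:ℝ)+1)*τ := by push_cast; ring
    rw [h1, key i hi, Nat.add_comm i 1]
  · intro k hk
    exact rr_integrable m τ v hm hτ _ _

end aux

theorem stmt3 (m d : ℕ) (hm : 0 < m) (hd : 0 < d)
    (v : ℕ → EuclideanSpace ℝ (Fin d)) (M : ℝ)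
    (hM : M = (Finset.Icc 1 m).sup' (Finset.nonempty_Icc.mpr hm) fun i => ‖v i‖) :
    (∀ τ : ℝ, 0 < τ → ∀ t' t'' : ℝ, 0 ≤ t' → t' ≤ t'' →
      ‖∫ s in t'..t'',
          (((m : ℝ))⁻¹ • ∑ i ∈ Finset.Icc 1 m, v i - v (roundRobin m τ s).toNat)‖
        ≤ 4 * m * τ * M) ∧
    (∀ a b : ℝ, 0 ≤ a →
      TendstoUniformlyOn
        (fun (τ : ℝ) (t : ℝ) => ∫ s in (0 : ℝ)..t,
          (((m : ℝ))⁻¹ • ∑ i ∈ Finset.Icc 1 m, v i - v (roundRobin m τ s).toNat))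
        (fun _ => (0 : EuclideanSpace ℝ (Fin d)))
        (nhdsWithin (0 : ℝ) (Set.Ioi 0)) (Set.Icc a b)) := by
  have hm' : (0:ℝ) < m := by exact_mod_cast hm
  set c : EuclideanSpace ℝ (Fin d) := ((m : ℝ))⁻¹ • ∑ i ∈ Finset.Icc 1 m, v i with hc
  have hvM : ∀ i ∈ Finset.Icc 1 m, ‖v i‖ ≤ M := by
    intro i hi; rw [hM]; exact Finset.le_sup' (fun i => ‖v i‖) hi
  have hM0 : 0 ≤ M := by
    have h1 : (1:ℕ) ∈ Finset.Icc 1 m := Finset.mem_Icc.mpr ⟨le_refl _, hm⟩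
    exact le_trans (norm_nonneg (v 1)) (hvM 1 h1)
  have hcM : ‖c‖ ≤ M := by
    rw [hc, norm_smul]
    have hsum : ‖∑ i ∈ Finset.Icc 1 m, v i‖ ≤ (m:ℝ) * M := by
      calc ‖∑ i ∈ Finset.Icc 1 m, v i‖ ≤ ∑ i ∈ Finset.Icc 1 m, ‖v i‖ :=
            norm_sum_le _ _
        _ ≤ (Finset.Icc 1 m).card • M := Finset.sum_le_card_nsmul _ _ _ hvM
        _ = (m:ℝ) * M := by rw [Nat.card_Icc]; simp [nsmul_eq_mul]
    calc ‖((m:ℝ))⁻¹‖ * ‖∑ i ∈ Finset.Icc 1 m, v i‖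
        ≤ ((m:ℝ))⁻¹ * ((m:ℝ) * M) := by
          apply mul_le_mul _ hsum (norm_nonneg _) (by positivity)
          rw [Real.norm_eq_abs, abs_of_nonneg (by positivity)]
      _ = M := by field_simp
  have hbound : ∀ τ : ℝ, 0 < τ → ∀ s : ℝ,
      ‖c - v (roundRobin m τ s).toNat‖ ≤ 2 * M := by
    intro τ hτ s
    have hmem := rr_mem m τ hm hτ s
    have hv : ‖v (roundRobin m τ s).toNat‖ ≤ M := by
      apply hvM
      simp only [Finset.mem_Icc]; omega
    calc ‖c - v (roundRobin m τ s).toNat‖ ≤ ‖c‖ + ‖v (roundRobin m τ s).toNat‖ :=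
          norm_sub_le _ _
      _ ≤ 2 * M := by linarith
  have hint : ∀ τ : ℝ, 0 < τ → ∀ a b : ℝ,
      IntervalIntegrable (fun s => c - v (roundRobin m τ s).toNat)
        MeasureTheory.volume a b := by
    intro τ hτ a b
    exact (intervalIntegrable_const).sub (rr_integrable m τ v hm hτ a b)
  have hper : ∀ τ : ℝ, Function.Periodic
      (fun s => c - v (roundRobin m τ s).toNat) ((m:ℝ)*τ) := by
    intro τ s
    simp only [rr_periodic m τ s]
  have hzeroT : ∀ τ : ℝ, 0 < τ →
      ∫ s in (0:ℝ)..((m:ℝ)*τ), (c - v (roundRobin m τ s).toNat) = 0 := by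
    intro τ hτ
    rw [intervalIntegral.integral_sub intervalIntegrable_const
      (rr_integrable m τ v hm hτ _ _)]
    rw [intervalIntegral.integral_const, rr_integral_period m τ v hm hτ]
    rw [hc, sub_zero, smul_smul]
    rw [show (m:ℝ)*τ*((m:ℝ))⁻¹ = τ by field_simp]
    simp
  have part1 : ∀ τ : ℝ, 0 < τ → ∀ t' t'' : ℝ, 0 ≤ t' → t' ≤ t'' →
      ‖∫ s in t'..t'', (c - v (roundRobin m τ s).toNat)‖ ≤ 4 * m * τ * M := by
    intro τ hτ t' t'' ht0 htle
    set T : ℝ := (m:ℝ)*τ with hT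
    have hTpos : 0 < T := by positivity
    set n : ℤ := ⌊(t'' - t')/T⌋ with hn
    have hn0 : 0 ≤ n := Int.floor_nonneg.mpr (div_nonneg (by linarith) hTpos.le)
    have hnle : (n:ℝ) * T ≤ t'' - t' := by
      have := Int.floor_le ((t'' - t')/T)
      rw [← hn] at this
      calc (n:ℝ) * T ≤ ((t'' - t')/T) * T := by
            apply mul_le_mul_of_nonneg_right this (le_of_lt hTpos)
        _ = t'' - t' := by field_simp
    have hnlt : t'' - t' < ((n:ℝ) + 1) * T := by
      have := Int.lt_floor_add_one ((t'' - t')/T)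
      rw [← hn] at this
      calc t'' - t' = ((t'' - t')/T) * T := by field_simp
        _ < ((n:ℝ) + 1) * T := by
            apply mul_lt_mul_of_pos_right this hTpos
    have hsplit : ∫ s in t'..t'', (c - v (roundRobin m τ s).toNat)
        = (∫ s in t'..(t' + n • T), (c - v (roundRobin m τ s).toNat))
          + ∫ s in (t' + n • T)..t'', (c - v (roundRobin m τ s).toNat) :=
      (intervalIntegral.integral_add_adjacent_intervals
        (hint τ hτ _ _) (hint τ hτ _ _)).symm
    have hfirst : (∫ s in t'..(t' + n • T), (c - v (roundRobin m τ s).toNat)) = 0 := by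
      rw [(hper τ).intervalIntegral_add_zsmul_eq n t' (fun a b => hint τ hτ a b)]
      rw [(hper τ).intervalIntegral_add_eq t' 0, zero_add, hzeroT τ hτ, smul_zero]
    have hsecond : ‖∫ s in (t' + n • T)..t'', (c - v (roundRobin m τ s).toNat)‖
        ≤ 2 * M * T := by
      have hb : ∀ x ∈ Set.uIoc (t' + n • T) t'', ‖c - v (roundRobin m τ x).toNat‖ ≤ 2 * M :=
        fun x _ => hbound τ hτ x
      calc ‖∫ s in (t' + n • T)..t'', (c - v (roundRobin m τ s).toNat)‖
          ≤ 2 * M * |t'' - (t' + n • T)| :=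
            intervalIntegral.norm_integral_le_of_norm_le_const hb
        _ ≤ 2 * M * T := by
            apply mul_le_mul_of_nonneg_left _ (by linarith)
            rw [zsmul_eq_mul, abs_of_nonneg (by linarith)]
            nlinarith
    rw [hsplit, hfirst, zero_add]
    calc ‖∫ s in (t' + n • T)..t'', (c - v (roundRobin m τ s).toNat)‖
        ≤ 2 * M * T := hsecond
      _ ≤ 4 * m * τ * M := by rw [hT]; nlinarith
  constructor
  · exact part1
  · intro a b ha
    rw [Metric.tendstoUniformlyOn_iff]
    intro ε hε
    have htend : Tendsto (fun τ : ℝ => 4 * m * τ * M)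
        (nhdsWithin (0:ℝ) (Set.Ioi 0)) (nhds 0) := by
      have hcont : Continuous fun τ : ℝ => 4 * m * τ * M := by fun_prop
      have := hcont.tendsto 0
      simpa using this.mono_left nhdsWithin_le_nhds
    have hev := htend.eventually_lt_const hε
    filter_upwards [hev, self_mem_nhdsWithin] with τ hτε hτ0
    intro t ht
    rw [dist_zero_left]
    calc ‖∫ s in (0:ℝ)..t, (c - v (roundRobin m τ s).toNat)‖
        ≤ 4 * m * τ * M := part1 τ hτ0 0 t le_rfl (le_trans ha ht.1)
      _ < ε := hτε
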